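/- Assume n = |p₁q₂ − p₂q₁| ≠ 0. Then the order of the image of (0, 1) in the quotient group (ℤ × ℤ)/Λ equals n / gcd(|p₁|, |p₂|), and the index in (ℤ × ℤ)/Λ of the cyclic subgroup generated by the image of (0, 1) equals gcd(|p₁|, |p₂|). (In the language of the paper: the translation v induces a permutation with μ_p = gcd(|p₁|, |p₂|) cycles, each of length n/μ_p.) -/

import Mathlib

lemma aux_coprime_solve (a b p q : ℤ) (h : IsCoprime p q) (he : a * p + b * q = 0) :
    ∃ t : ℤ, a = t * q ∧ b = -(t * p) := by
  obtain ⟨u, v, huv⟩ := h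
  refine ⟨a * v - b * u, ?_, ?_⟩
  · linear_combination u * he - a * huv
  · linear_combination v * he - b * huv

/-- Let `Λ ≤ ℤ × ℤ` be generated by `(p₁, q₁)` and `(p₂, q₂)`, and assume
`n = |p₁q₂ − p₂q₁| ≠ 0`.  Then the order of the image of `(0, 1)` in `(ℤ × ℤ)/Λ`
equals `n / gcd(|p₁|, |p₂|)`, and the index in `(ℤ × ℤ)/Λ` of the cyclic subgroup
generated by the image of `(0, 1)` equals `gcd(|p₁|, |p₂|)`. -/
theorem stmt7 (p₁ q₁ p₂ q₂ : ℤ) (hn : p₁ * q₂ - p₂ * q₁ ≠ 0) :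
    addOrderOf ((QuotientAddGroup.mk ((0, 1) : ℤ × ℤ)) :
        (ℤ × ℤ) ⧸ AddSubgroup.closure {((p₁, q₁) : ℤ × ℤ), (p₂, q₂)})
      = (p₁ * q₂ - p₂ * q₁).natAbs / Nat.gcd p₁.natAbs p₂.natAbs ∧
    (AddSubgroup.zmultiples ((QuotientAddGroup.mk ((0, 1) : ℤ × ℤ)) :
        (ℤ × ℤ) ⧸ AddSubgroup.closure {((p₁, q₁) : ℤ × ℤ), (p₂, q₂)})).index
      = Nat.gcd p₁.natAbs p₂.natAbs := by
  set Λ : AddSubgroup (ℤ × ℤ) := AddSubgroup.closure {((p₁, q₁) : ℤ × ℤ), (p₂, q₂)} with hΛ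
  set g : ℕ := Nat.gcd p₁.natAbs p₂.natAbs with hgdef
  have hgInt : (g : ℤ) = Int.gcd p₁ p₂ := rfl
  have hg0 : g ≠ 0 := by
    intro h
    rw [hgdef, Nat.gcd_eq_zero_iff] at h
    have h1 : p₁ = 0 := Int.natAbs_eq_zero.mp h.1
    have h2 : p₂ = 0 := Int.natAbs_eq_zero.mp h.2
    exact hn (by rw [h1, h2]; ring)
  have hgZ0 : (g : ℤ) ≠ 0 := Int.natCast_ne_zero.mpr hg0
  obtain ⟨p₁', hp1⟩ : (g : ℤ) ∣ p₁ := Int.gcd_dvd_left p₁ p₂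
  obtain ⟨p₂', hp2⟩ : (g : ℤ) ∣ p₂ := Int.gcd_dvd_right p₁ p₂
  have hcop : IsCoprime p₁' p₂' := by
    rw [Int.isCoprime_iff_gcd_eq_one]
    have h1 : p₁ / (g : ℤ) = p₁' := by rw [hp1]; exact Int.mul_ediv_cancel_left _ hgZ0
    have h2 : p₂ / (g : ℤ) = p₂' := by rw [hp2]; exact Int.mul_ediv_cancel_left _ hgZ0
    rw [← h1, ← h2, hgInt]
    exact Int.gcd_div_gcd_div_gcd (Nat.pos_of_ne_zero hg0)
  set d' : ℤ := p₁' * q₂ - p₂' * q₁ with hd'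
  have hdd : p₁ * q₂ - p₂ * q₁ = (g : ℤ) * d' := by rw [hp1, hp2]; ring
  have hd'0 : d' ≠ 0 := by
    intro h; exact hn (by rw [hdd, h, mul_zero])
  set x : (ℤ × ℤ) ⧸ Λ := (QuotientAddGroup.mk ((0, 1) : ℤ × ℤ)) with hx
  -- membership characterization
  have hmem : ∀ u v : ℤ, (u, v) ∈ Λ ↔ ∃ a b : ℤ,
      a * p₁ + b * p₂ = u ∧ a * q₁ + b * q₂ = v := by
    intro u v
    rw [hΛ, AddSubgroup.mem_closure_pair]
    constructor
    · rintro ⟨a, b, hab⟩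
      refine ⟨a, b, ?_, ?_⟩
      · simpa [Prod.smul_def, smul_eq_mul] using congrArg Prod.fst hab
      · simpa [Prod.smul_def, smul_eq_mul] using congrArg Prod.snd hab
    · rintro ⟨a, b, h1, h2⟩
      refine ⟨a, b, ?_⟩
      ext <;> simp [Prod.smul_def, smul_eq_mul, h1, h2]
  -- key : k • x = 0 ↔ d' ∣ k
  have key : ∀ k : ℤ, k • x = 0 ↔ d' ∣ k := by
    intro k
    have h1 : k • x = (QuotientAddGroup.mk ((0, k) : ℤ × ℤ)) := by
      rw [hx, ← QuotientAddGroup.mk_zsmul]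
      congr 1
      ext <;> simp [Prod.smul_def, smul_eq_mul]
    rw [h1, QuotientAddGroup.eq_zero_iff, hmem 0 k]
    constructor
    · rintro ⟨a, b, h1, h2⟩
      have h3 : a * p₁' + b * p₂' = 0 := by
        have : (g : ℤ) * (a * p₁' + b * p₂') = 0 := by
          rw [hp1, hp2] at h1; linear_combination h1
        exact (mul_eq_zero.mp this).resolve_left hgZ0
      obtain ⟨t, rfl, rfl⟩ := aux_coprime_solve a b p₁' p₂' hcop h3
      exact ⟨-t, by rw [← h2]; ring⟩
    · rintro ⟨s, rfl⟩
      exact ⟨-s * p₂', s * p₁', by rw [hp1, hp2]; ring, by ring⟩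
  constructor
  · -- addOrderOf
    have hsm : (d'.natAbs : ℤ) • x = 0 := (key _).mpr (Int.dvd_natAbs.mpr dvd_rfl)
    have hsm' : d'.natAbs • x = 0 := by rwa [natCast_zsmul] at hsm
    have hdvd1 : addOrderOf x ∣ d'.natAbs := addOrderOf_dvd_of_nsmul_eq_zero hsm'
    have hfin : IsOfFinAddOrder x := by
      rw [isOfFinAddOrder_iff_nsmul_eq_zero]
      exact ⟨d'.natAbs, Nat.pos_of_ne_zero (Int.natAbs_ne_zero.mpr hd'0), hsm'⟩
    have hdvd2 : d'.natAbs ∣ addOrderOf x := by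
      have h2 : (addOrderOf x : ℤ) • x = 0 := by
        rw [natCast_zsmul]; exact addOrderOf_nsmul_eq_zero x
      have h3 := (key _).mp h2
      simpa using Int.natAbs_dvd_natAbs.mpr h3
    have hord : addOrderOf x = d'.natAbs := Nat.dvd_antisymm hdvd1 hdvd2
    rw [hord, hdd]
    rw [Int.natAbs_mul, Int.natAbs_natCast]
    exact (Nat.mul_div_cancel_left _ (Nat.pos_of_ne_zero hg0)).symm
  · -- index
    have hx' : x = QuotientAddGroup.mk' Λ ((0, 1) : ℤ × ℤ) := rfl
    have hmap : AddSubgroup.zmultiples x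
        = (AddSubgroup.zmultiples ((0, 1) : ℤ × ℤ)).map (QuotientAddGroup.mk' Λ) := by
      rw [hx', AddMonoidHom.map_zmultiples]
    rw [hmap, AddSubgroup.index_map, QuotientAddGroup.ker_mk',
      AddMonoidHom.range_eq_top_of_surjective _ (QuotientAddGroup.mk'_surjective Λ),
      AddSubgroup.index_top, mul_one]
    -- the sup is the kernel of the map to ZMod g
    set φ : (ℤ × ℤ) →+ ZMod g := (Int.castAddHom (ZMod g)).comp (AddMonoidHom.fst ℤ ℤ) with hφ
    have hker : ∀ y : ℤ × ℤ, y ∈ φ.ker ↔ (g : ℤ) ∣ y.1 := by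
      intro y
      rw [AddMonoidHom.mem_ker, hφ, AddMonoidHom.comp_apply, Int.coe_castAddHom,
        AddMonoidHom.coe_fst, ZMod.intCast_zmod_eq_zero_iff_dvd]
    have hsup : AddSubgroup.zmultiples ((0, 1) : ℤ × ℤ) ⊔ Λ = φ.ker := by
      apply le_antisymm
      · apply sup_le
        · rw [AddSubgroup.zmultiples_le]
          rw [hker]; exact dvd_zero _
        · rw [hΛ, AddSubgroup.closure_le]
          rintro y (rfl | rfl)
          · rw [SetLike.mem_coe, hker]; exact Dvd.intro p₁' hp1.symm
          · rw [SetLike.mem_coe, hker]; exact Dvd.intro p₂' hp2.symm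
      · intro y hy
        rw [hker] at hy
        obtain ⟨t, ht⟩ := hy
        set A := Int.gcdA p₁ p₂ with hA
        set B := Int.gcdB p₁ p₂ with hB
        have hbez : (g : ℤ) = p₁ * A + p₂ * B := by
          rw [hgInt]; exact Int.gcd_eq_gcd_ab p₁ p₂
        set c₁ := t * A with hc1
        set c₂ := t * B with hc2
        have hy' : y = c₁ • ((p₁, q₁) : ℤ × ℤ) + c₂ • ((p₂, q₂) : ℤ × ℤ)
            + (y.2 - c₁ * q₁ - c₂ * q₂) • ((0, 1) : ℤ × ℤ) := by
          ext
          · simp only [Prod.fst_add, Prod.smul_fst, smul_eq_mul]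
            rw [ht, hbez]; ring
          · simp only [Prod.snd_add, Prod.smul_snd, smul_eq_mul]
            ring
        rw [hy']
        refine AddSubgroup.add_mem _ (AddSubgroup.add_mem _ ?_ ?_) ?_
        · exact AddSubgroup.mem_sup_right (AddSubgroup.zsmul_mem _
            (AddSubgroup.subset_closure (by simp)) _)
        · exact AddSubgroup.mem_sup_right (AddSubgroup.zsmul_mem _
            (AddSubgroup.subset_closure (by simp)) _)
        · exact AddSubgroup.mem_sup_left (AddSubgroup.zsmul_mem _
            (AddSubgroup.mem_zmultiples _) _)
    rw [hsup, AddSubgroup.index_ker]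
    have hsurj : Function.Surjective φ := by
      intro z
      obtain ⟨k, hk⟩ := ZMod.intCast_surjective z
      exact ⟨(k, 0), hk⟩
    rw [AddMonoidHom.range_eq_top_of_surjective _ hsurj]
    have htop : Nat.card (⊤ : AddSubgroup (ZMod g)) = Nat.card (ZMod g) :=
      Nat.card_congr AddSubgroup.topEquiv.toEquiv
    rw [htop, Nat.card_zmod]
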